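/- The number of m-ballot paths of size n (lattice paths from (0,0) to (mn,n) using unit north and east steps that never go below the line x = m·y) equals (1/(mn+1))·C((m+1)n, n). -/

import Mathlib

open Finset Fin.NatCast

namespace MBallot

abbrev ind (b : Bool) : ℤ := if b then 1 else 0

abbrev Ln (m n : ℕ) : ℕ := (m+1)*n + 1

variable {m n : ℕ}

def cnt (v : Fin (Ln m n) → Bool) (k : ℕ) : ℤ :=
  ∑ i ∈ range k, ind (v i)

def gg (v : Fin (Ln m n) → Bool) (k : ℕ) : ℤ :=
  (k : ℤ) - (m+1) * cnt v k

lemma cnt_Ln_eq (v : Fin (Ln m n) → Bool) :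
    cnt v (Ln m n) = ((univ.filter fun i => v i = true).card : ℤ) := by
  rw [cnt, ← Fin.sum_univ_eq_sum_range (fun i => ind (v i)) (Ln m n), Finset.card_filter]
  push_cast
  refine Finset.sum_congr rfl fun i _ => ?_
  rfl

lemma cnt_add (v : Fin (Ln m n) → Bool) (t : ℕ) :
    cnt v (t + Ln m n) = cnt v t + cnt v (Ln m n) := by
  rw [cnt, cnt, cnt, Finset.sum_range_add]
  congr 1
  have h1 : ∑ x ∈ range (Ln m n), ind (v ((t + x : ℕ)))
      = ∑ x ∈ range (Ln m n), ind (v ((t : Fin (Ln m n)) + ((x : ℕ) : Fin (Ln m n)))) :=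
    Finset.sum_congr rfl fun x _ => by rw [Nat.cast_add]
  rw [h1,
    ← Fin.sum_univ_eq_sum_range (fun x => ind (v ((t : Fin (Ln m n)) + ((x : ℕ) : Fin (Ln m n))))) (Ln m n),
    ← Fin.sum_univ_eq_sum_range (fun x => ind (v ((x : ℕ) : Fin (Ln m n)))) (Ln m n)]
  simp only [Fin.cast_val_eq_self]
  simpa using Equiv.sum_comp (Equiv.addLeft (t : Fin (Ln m n))) (fun j => ind (v j))

lemma gg_add (v : Fin (Ln m n) → Bool) (hv : cnt v (Ln m n) = n) (t : ℕ) :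
    gg v (t + Ln m n) = gg v t + 1 := by
  rw [gg, gg, cnt_add v t, hv]
  push_cast
  ring

def rot (j : Fin (Ln m n)) (v : Fin (Ln m n) → Bool) : Fin (Ln m n) → Bool :=
  fun i => v (i + j)

lemma cnt_rot (j : Fin (Ln m n)) (v : Fin (Ln m n) → Bool) (k : ℕ) :
    cnt (rot j v) k = cnt v (j.val + k) - cnt v j.val := by
  have key : cnt v (j.val + k) = cnt v j.val + cnt (rot j v) k := by
    rw [cnt, cnt, cnt, Finset.sum_range_add]
    congr 1
    refine Finset.sum_congr rfl fun x _ => ?_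
    show ind (v (((j.val + x : ℕ) : Fin (Ln m n)))) = ind (v (((x : ℕ) : Fin (Ln m n)) + j))
    rw [Nat.cast_add, Fin.cast_val_eq_self, add_comm]
  rw [key]
  ring

lemma gg_rot (j : Fin (Ln m n)) (v : Fin (Ln m n) → Bool) (k : ℕ) :
    gg (rot j v) k = gg v (j.val + k) - gg v j.val := by
  rw [gg, gg, gg, cnt_rot]
  push_cast
  ring

lemma cnt_rot_Ln (j : Fin (Ln m n)) (v : Fin (Ln m n) → Bool) :
    cnt (rot j v) (Ln m n) = cnt v (Ln m n) := by
  rw [cnt_rot, cnt_add]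
  ring

lemma exists_dom_nat (v : Fin (Ln m n) → Bool) (hv : cnt v (Ln m n) = n) :
    ∃ t < Ln m n, ∀ k, 1 ≤ k → k ≤ Ln m n → gg v t < gg v (t + k) := by
  have hL : 0 < Ln m n := Nat.succ_pos _
  obtain ⟨a, ha, hamin⟩ := Finset.exists_min_image (range (Ln m n)) (gg v) ⟨0, mem_range.2 hL⟩
  set s := (range (Ln m n)).filter (fun i => gg v i = gg v a) with hs
  have hsne : s.Nonempty := ⟨a, by simp [hs, mem_range.1 ha]⟩
  set t := s.max' hsne with ht
  have hts : t ∈ s := s.max'_mem hsne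
  have htL : t < Ln m n := mem_range.1 (Finset.mem_filter.1 hts).1
  have htval : gg v t = gg v a := (Finset.mem_filter.1 hts).2
  refine ⟨t, htL, fun k hk1 hkL => ?_⟩
  rcases lt_or_ge (t + k) (Ln m n) with h | h
  · have hmin : gg v a ≤ gg v (t+k) := hamin _ (mem_range.2 h)
    rcases eq_or_lt_of_le hmin with he | hlt
    · exfalso
      have hmem : t + k ∈ s := by
        rw [hs, Finset.mem_filter]
        exact ⟨mem_range.2 h, he.symm⟩
      have := s.le_max' _ hmem
      omega
    · omega
  · have h2 : t + k = (t + k - Ln m n) + Ln m n := by omega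
    rw [h2, gg_add v hv]
    have := hamin _ (mem_range.2 (show t + k - Ln m n < Ln m n by omega))
    omega

lemma dom_unique_nat (v : Fin (Ln m n) → Bool) (hv : cnt v (Ln m n) = n) {a b : ℕ}
    (ha : a < Ln m n) (hb : b < Ln m n)
    (Pa : ∀ k, 1 ≤ k → k ≤ Ln m n → gg v a < gg v (a + k))
    (Pb : ∀ k, 1 ≤ k → k ≤ Ln m n → gg v b < gg v (b + k)) : a = b := by
  rcases lt_trichotomy a b with hab | hab | hab
  · have h1 := Pa (b - a) (by omega) (by omega)
    have h2 := Pb (a + Ln m n - b) (by omega) (by omega)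
    rw [show a + (b-a) = b by omega] at h1
    rw [show b + (a + Ln m n - b) = a + Ln m n by omega, gg_add v hv a] at h2
    omega
  · exact hab
  · have h1 := Pb (a - b) (by omega) (by omega)
    have h2 := Pa (b + Ln m n - a) (by omega) (by omega)
    rw [show b + (a-b) = a by omega] at h1
    rw [show a + (b + Ln m n - a) = b + Ln m n by omega, gg_add v hv b] at h2
    omega

def Dom (v : Fin (Ln m n) → Bool) : Prop :=
  ∀ k, 1 ≤ k → k ≤ Ln m n → 0 < gg v k

lemma dom_rot_iff (j : Fin (Ln m n)) (v : Fin (Ln m n) → Bool) :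
    Dom (rot j v) ↔ ∀ k, 1 ≤ k → k ≤ Ln m n → gg v j.val < gg v (j.val + k) := by
  unfold Dom
  refine forall_congr' fun k => ?_
  refine imp_congr_right fun _ => imp_congr_right fun _ => ?_
  rw [gg_rot, sub_pos]

lemma exists_unique_dom (v : Fin (Ln m n) → Bool) (hv : cnt v (Ln m n) = n) :
    ∃! j : Fin (Ln m n), Dom (rot j v) := by
  obtain ⟨t, htL, ht⟩ := exists_dom_nat v hv
  refine ⟨⟨t, htL⟩, (dom_rot_iff _ v).2 ht, fun j hj => ?_⟩
  apply Fin.ext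
  exact dom_unique_nat v hv j.isLt htL ((dom_rot_iff j v).1 hj) ht

variable (m n)

def Words := {v : Fin (Ln m n) → Bool // cnt v (Ln m n) = (n : ℤ)}

def DWords := {v : Fin (Ln m n) → Bool // cnt v (Ln m n) = (n : ℤ) ∧ Dom v}

variable {m n}

lemma rot_rot (j j' : Fin (Ln m n)) (v : Fin (Ln m n) → Bool) :
    rot j (rot j' v) = rot (j + j') v := by
  funext i
  show v (i + j + j') = v (i + (j + j'))
  rw [add_assoc]

lemma rot_zero (v : Fin (Ln m n) → Bool) : rot 0 v = v := by
  funext i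
  show v (i + 0) = v i
  rw [add_zero]

def Phi : Fin (Ln m n) × DWords m n → Words m n :=
  fun p => ⟨rot p.1 p.2.1, by rw [cnt_rot_Ln]; exact p.2.2.1⟩

lemma Phi_bij : Function.Bijective (Phi (m := m) (n := n)) := by
  constructor
  · rintro ⟨j, d⟩ ⟨j', d'⟩ h
    have hval : rot j d.1 = rot j' d'.1 := congrArg Subtype.val h
    set u := rot j d.1 with hu
    have hcu : cnt u (Ln m n) = (n : ℤ) := by rw [hu, cnt_rot_Ln]; exact d.2.1
    have hd : rot (-j) u = d.1 := by rw [hu, rot_rot, neg_add_cancel, rot_zero]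
    have hd' : rot (-j') u = d'.1 := by rw [hval, rot_rot, neg_add_cancel, rot_zero]
    obtain ⟨j₀, -, huniq⟩ := exists_unique_dom u hcu
    have e1 : -j = j₀ := huniq _ (show Dom (rot (-j) u) by rw [hd]; exact d.2.2)
    have e2 : -j' = j₀ := huniq _ (show Dom (rot (-j') u) by rw [hd']; exact d'.2.2)
    have hjj : j = j' := by
      have : -j = -j' := e1.trans e2.symm
      exact neg_injective this
    subst hjj
    have : d = d' := Subtype.ext (by rw [← hd, ← hd'])
    rw [this]
  · rintro ⟨u, hu⟩
    obtain ⟨j, hj, -⟩ := exists_unique_dom u hu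
    refine ⟨⟨-j, ⟨rot j u, by rw [cnt_rot_Ln]; exact hu, hj⟩⟩, ?_⟩
    apply Subtype.ext
    show rot (-j) (rot j u) = u
    rw [rot_rot, neg_add_cancel, rot_zero]

variable (m n)

def wordsEquiv : Words m n ≃ {s : Finset (Fin (Ln m n)) // s.card = n} where
  toFun v := ⟨univ.filter (fun i => v.1 i = true), by
    have := v.2
    rw [cnt_Ln_eq] at this
    exact_mod_cast this⟩
  invFun s := ⟨fun i => decide (i ∈ s.1), by
    rw [cnt_Ln_eq]
    have : (univ.filter fun i => decide (i ∈ s.1) = true) = s.1 := by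
      ext i; simp
    rw [this, s.2]⟩
  left_inv v := by
    apply Subtype.ext
    funext i
    simp
  right_inv s := by
    apply Subtype.ext
    ext i
    simp

lemma card_words : Nat.card (Words m n) = Nat.choose (Ln m n) n := by
  rw [Nat.card_congr (wordsEquiv m n), Nat.card_eq_fintype_card, Fintype.card_finset_len,
    Fintype.card_fin]

lemma card_main : (Ln m n) * Nat.card (DWords m n) = Nat.choose (Ln m n) n := by
  have h := Nat.card_eq_of_bijective _ (Phi_bij (m := m) (n := n))
  rw [Nat.card_prod, Nat.card_eq_fintype_card (α := Fin (Ln m n)), Fintype.card_fin] at h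
  rw [h, card_words]

-- Bridge to the theorem's encoding

lemma cnt_cons_succ (w : Fin ((m+1)*n) → Bool) :
    ∀ k, k ≤ (m+1)*n → cnt (Fin.cons false w : Fin (Ln m n) → Bool) (k+1)
      = ((univ.filter fun i : Fin ((m+1)*n) => (i : ℕ) < k ∧ w i = true).card : ℤ) := by
  intro k
  induction k with
  | zero =>
    intro _
    rw [cnt, Finset.sum_range_one]
    have h0 : ((0 : ℕ) : Fin (Ln m n)) = 0 := Nat.cast_zero
    rw [h0]
    simp [ind]
  | succ k ih =>
    intro hk
    have hkN : k < (m+1)*n := hk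
    rw [cnt, Finset.sum_range_succ, ← cnt, ih (le_of_lt hkN)]
    have hcast : ((k+1 : ℕ) : Fin (Ln m n)) = Fin.succ ⟨k, hkN⟩ := by
      apply Fin.ext
      rw [Fin.val_cast_of_lt (Nat.succ_lt_succ hkN)]
      simp
    rw [hcast, Fin.cons_succ]
    by_cases hw : w ⟨k, hkN⟩ = true
    · have hset : (univ.filter fun i : Fin ((m+1)*n) => (i : ℕ) < k+1 ∧ w i = true)
          = insert ⟨k, hkN⟩ (univ.filter fun i : Fin ((m+1)*n) => (i : ℕ) < k ∧ w i = true) := by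
        ext i
        simp only [Finset.mem_filter, Finset.mem_insert, Finset.mem_univ, true_and]
        constructor
        · rintro ⟨hik, hwi⟩
          rcases Nat.lt_succ_iff_lt_or_eq.1 hik with h | h
          · exact Or.inr ⟨h, hwi⟩
          · exact Or.inl (Fin.ext h)
        · rintro (rfl | ⟨hik, hwi⟩)
          · exact ⟨Nat.lt_succ_self _, hw⟩
          · exact ⟨Nat.lt_succ_of_lt hik, hwi⟩
      rw [hset, Finset.card_insert_of_notMem (by simp), hw]
      push_cast
      simp [ind]
    · have hset : (univ.filter fun i : Fin ((m+1)*n) => (i : ℕ) < k+1 ∧ w i = true)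
          = (univ.filter fun i : Fin ((m+1)*n) => (i : ℕ) < k ∧ w i = true) := by
        ext i
        simp only [Finset.mem_filter, Finset.mem_univ, true_and]
        constructor
        · rintro ⟨hik, hwi⟩
          rcases Nat.lt_succ_iff_lt_or_eq.1 hik with h | h
          · exact ⟨h, hwi⟩
          · exact absurd hwi (by rw [show i = ⟨k, hkN⟩ from Fin.ext h]; exact hw)
        · rintro ⟨hik, hwi⟩
          exact ⟨Nat.lt_succ_of_lt hik, hwi⟩
      rw [hset]
      simp [ind, hw]

lemma TF_card (w : Fin ((m+1)*n) → Bool) {k : ℕ} (hk : k ≤ (m+1)*n) :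
    (univ.filter fun i : Fin ((m+1)*n) => (i : ℕ) < k ∧ w i = true).card
  + (univ.filter fun i : Fin ((m+1)*n) => (i : ℕ) < k ∧ w i = false).card = k := by
  have hsplit := Finset.card_filter_add_card_filter_not
    (s := univ.filter fun i : Fin ((m+1)*n) => (i : ℕ) < k) (p := fun i => w i = true)
  rw [Finset.filter_filter, Finset.filter_filter] at hsplit
  have hcard : (univ.filter fun i : Fin ((m+1)*n) => (i : ℕ) < k).card = k := by
    have : (univ.filter fun i : Fin ((m+1)*n) => (i : ℕ) < k)
        = (range k).attachFin (fun x hx => lt_of_lt_of_le (mem_range.1 hx) hk) := by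
      ext i
      simp [Finset.mem_attachFin]
    rw [this, Finset.card_attachFin, card_range]
  rw [hcard] at hsplit
  have hneg : (univ.filter fun a : Fin ((m+1)*n) => (a : ℕ) < k ∧ ¬ w a = true)
      = (univ.filter fun a : Fin ((m+1)*n) => (a : ℕ) < k ∧ w a = false) := by
    ext i
    simp
  rw [hneg] at hsplit
  exact hsplit

lemma filter_lt_N (w : Fin ((m+1)*n) → Bool) :
    (univ.filter fun i : Fin ((m+1)*n) => (i : ℕ) < (m+1)*n ∧ w i = true)
      = univ.filter fun i => w i = true := by
  apply Finset.filter_congr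
  intro i _
  simp [i.isLt]

lemma cond_iff (w : Fin ((m+1)*n) → Bool) :
    ((univ.filter fun i => w i = true).card = n ∧
      ∀ k ≤ (m+1)*n,
        m * (univ.filter fun i : Fin ((m+1)*n) => (i : ℕ) < k ∧ w i = true).card ≤
          (univ.filter fun i : Fin ((m+1)*n) => (i : ℕ) < k ∧ w i = false).card)
    ↔ (cnt (Fin.cons false w : Fin (Ln m n) → Bool) (Ln m n) = (n : ℤ) ∧
        Dom (Fin.cons false w : Fin (Ln m n) → Bool)) := by
  have hcN : cnt (Fin.cons false w : Fin (Ln m n) → Bool) (Ln m n)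
      = ((univ.filter fun i : Fin ((m+1)*n) => w i = true).card : ℤ) := by
    have := cnt_cons_succ m n w ((m+1)*n) le_rfl
    rw [filter_lt_N] at this
    exact this
  constructor
  · rintro ⟨hcount, hcond⟩
    refine ⟨by rw [hcN]; exact_mod_cast hcount, fun k hk1 hkL => ?_⟩
    have hkL' : k ≤ (m+1)*n + 1 := hkL
    obtain ⟨k', rfl⟩ : ∃ k', k = k' + 1 := ⟨k - 1, by omega⟩
    have hk'N : k' ≤ (m+1)*n := by omega
    rw [gg, cnt_cons_succ m n w k' hk'N]
    have hTF := TF_card m n w hk'N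
    have hmT := hcond k' hk'N
    set T := (univ.filter fun i : Fin ((m+1)*n) => (i : ℕ) < k' ∧ w i = true).card
    set F := (univ.filter fun i : Fin ((m+1)*n) => (i : ℕ) < k' ∧ w i = false).card
    have h1 : ((m * T : ℕ) : ℤ) ≤ (F : ℤ) := by exact_mod_cast hmT
    push_cast at h1 ⊢
    have h2 : (T : ℤ) + F = k' := by exact_mod_cast hTF
    linarith
  · rintro ⟨hcount, hdom⟩
    constructor
    · rw [hcN] at hcount
      exact_mod_cast hcount
    · intro k hk
      have hg := hdom (k+1) (by omega) (Nat.succ_le_succ hk)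
      rw [gg, cnt_cons_succ m n w k hk] at hg
      have hTF := TF_card m n w hk
      set T := (univ.filter fun i : Fin ((m+1)*n) => (i : ℕ) < k ∧ w i = true).card
      set F := (univ.filter fun i : Fin ((m+1)*n) => (i : ℕ) < k ∧ w i = false).card
      have h2 : (T : ℤ) + F = k := by exact_mod_cast hTF
      have h3 : ((m : ℤ)+1) * T < (k : ℤ) + 1 := by push_cast at hg ⊢; linarith
      have h4 : ((m : ℤ)+1) * T ≤ (k : ℤ) := Int.lt_add_one_iff.mp h3
      have h5 : (m : ℤ) * T ≤ (F : ℤ) := by linarith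
      exact_mod_cast h5

lemma card_T_eq :
    Nat.card {w : Fin ((m+1)*n) → Bool //
      (Finset.univ.filter fun i => w i = true).card = n ∧
      ∀ k ≤ (m+1)*n,
        m * (Finset.univ.filter fun i : Fin ((m+1)*n) => (i : ℕ) < k ∧ w i = true).card ≤
          (Finset.univ.filter fun i : Fin ((m+1)*n) => (i : ℕ) < k ∧ w i = false).card}
    = Nat.card (DWords m n) := by
  apply Nat.card_eq_of_bijective
    (fun w => (⟨Fin.cons false w.1, (cond_iff m n w.1).1 w.2⟩ : DWords m n))
  constructor
  · rintro ⟨a, ha⟩ ⟨b, hb⟩ hab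
    apply Subtype.ext
    funext i
    have := congrArg (fun f : DWords m n => f.1 i.succ) hab
    simpa using this
  · rintro ⟨v, hv⟩
    have hv0 : v 0 = false := by
      have h1 := hv.2 1 le_rfl (Nat.succ_le_succ (Nat.zero_le _))
      rw [gg, cnt, Finset.sum_range_one] at h1
      have h0 : ((0 : ℕ) : Fin (Ln m n)) = 0 := Nat.cast_zero
      rw [h0] at h1
      cases hb : v 0
      · rfl
      · rw [hb] at h1
        simp [ind] at h1
        omega
    have hcons : (Fin.cons false (fun i => v i.succ) : Fin (Ln m n) → Bool) = v := by
      funext i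
      refine Fin.cases ?_ (fun j => ?_) i
      · rw [Fin.cons_zero, hv0]
      · rw [Fin.cons_succ]
    refine ⟨⟨fun i => v i.succ, (cond_iff m n _).2 (by rw [hcons]; exact hv)⟩, ?_⟩
    exact Subtype.ext hcons

end MBallot

/-- The number of `m`-ballot paths of size `n` (paths from (0,0) to (mn,n) with unit north
and east steps, never going below the line x = m·y) equals (1/(mn+1))·C((m+1)n, n).
A path is encoded as a function `Fin ((m+1)*n) → Bool`, `true` = north step, `false` = east
step. The condition that every vertex (x,y) satisfies x ≥ m·y says that every prefix has
(number of east steps) ≥ m · (number of north steps). -/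
theorem mBallot_count (m n : ℕ) (hm : 1 ≤ m) :
    (Nat.card {w : Fin ((m+1)*n) → Bool //
      (Finset.univ.filter fun i => w i = true).card = n ∧
      ∀ k ≤ (m+1)*n,
        m * (Finset.univ.filter fun i : Fin ((m+1)*n) => (i : ℕ) < k ∧ w i = true).card ≤
          (Finset.univ.filter fun i : Fin ((m+1)*n) => (i : ℕ) < k ∧ w i = false).card} : ℚ)
    = 1/((m : ℚ)*n+1) * (Nat.choose ((m+1)*n) n : ℚ) := by
  have h1 := MBallot.card_T_eq m n
  have h2 := MBallot.card_main m n
  simp only [MBallot.Ln] at h2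
  obtain ⟨cD, hcD⟩ : ∃ c, Nat.card (MBallot.DWords m n) = c := ⟨_, rfl⟩
  rw [hcD] at h1 h2
  have h3 := Nat.choose_mul_succ_eq ((m+1)*n) n
  have h4 : (m+1)*n + 1 - n = m*n + 1 := by
    clear h1 hcD
    have h : (m+1)*n = m*n + n := by ring
    omega
  rw [h4] at h3
  have h5 : ((m+1)*n+1) * Nat.choose ((m+1)*n) n = ((m+1)*n+1) * (cD * (m*n+1)) := by
    rw [mul_comm, h3, ← h2]
    ring
  have h6 : Nat.choose ((m+1)*n) n = cD * (m*n+1) :=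
    Nat.eq_of_mul_eq_mul_left (Nat.succ_pos _) h5
  rw [h1]
  have h7 : (Nat.choose ((m+1)*n) n : ℚ) = (cD : ℚ) * ((m:ℚ)*n+1) := by
    rw [h6]; push_cast; ring
  rw [h7]
  have hpos : ((m : ℚ)*n + 1) ≠ 0 := by positivity
  field_simp
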